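/- arXiv:2505.21195 — 2 statements merged into one kernel-verified Lean document; each statement's English description precedes it below -/
import Mathlib

section
/- For d ≥ 1 an integer and γ ∈ (1, 2), the function λ ↦ λ^{−γ} ∫_{ℝ^d} (∫_{B(1)} e^{−λ‖y−u‖} dy)^γ du (where B(1) is the unit ball in ℝ^d) is finite for every λ > 0 and satisfies: it is O(λ^{−γ−d}) as λ → 0 and O(λ^{−γ(1+d)}) as λ → ∞. -/
open MeasureTheory Real Filter Asymptotics Set Metric

lemma aux_int1D {b : ℝ} (hb : 0 < b) :
    Integrable (fun x : ℝ => Real.exp (-(b * |x|))) := by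
  have hIoi : IntegrableOn (fun x : ℝ => Real.exp (-(b * |x|))) (Set.Ioi 0) := by
    refine (exp_neg_integrableOn_Ioi 0 hb).congr_fun (fun x hx => ?_) measurableSet_Ioi
    rw [abs_of_pos hx]; ring_nf
  have hIic : IntegrableOn (fun x : ℝ => Real.exp (-(b * |x|))) (Set.Iic 0) := by
    rw [← Measure.map_neg_eq_self (volume : Measure ℝ)]
    have m : MeasurableEmbedding fun x : ℝ => -x := (Homeomorph.neg ℝ).measurableEmbedding
    rw [m.integrableOn_map_iff]
    simp_rw [Function.comp_def, abs_neg, neg_preimage, neg_Iic, neg_zero]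
    exact Iff.mpr integrableOn_Ici_iff_integrableOn_Ioi hIoi
  have h := hIic.union hIoi
  rwa [Set.Iic_union_Ioi, integrableOn_univ] at h

lemma aux_coord_le {d : ℕ} (u : EuclideanSpace ℝ (Fin d)) (i : Fin d) : |u i| ≤ ‖u‖ := by
  rw [EuclideanSpace.norm_eq, ← Real.sqrt_sq_eq_abs]
  apply Real.sqrt_le_sqrt
  simp_rw [Real.norm_eq_abs, sq_abs]
  exact Finset.single_le_sum (f := fun j => u j ^ 2) (fun j _ => sq_nonneg _) (Finset.mem_univ i)

lemma aux_intE (d : ℕ) (hd : 1 ≤ d) {c : ℝ} (hc : 0 < c) :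
    Integrable (fun u : EuclideanSpace ℝ (Fin d) => Real.exp (-(c * ‖u‖))) := by
  have hd0 : (0 : ℝ) < d := by exact_mod_cast hd
  have hb : 0 < c / d := div_pos hc hd0
  have hprod : Integrable (fun x : Fin d → ℝ => ∏ i, Real.exp (-(c / d * |x i|))) :=
    Integrable.fintype_prod (fun _ => aux_int1D hb)
  have hE : Integrable (fun u : EuclideanSpace ℝ (Fin d) =>
      ∏ i, Real.exp (-(c / d * |u i|))) := by
    have hmp := EuclideanSpace.volume_preserving_symm_measurableEquiv_toLp (Fin d)
    have := (hmp.integrable_comp_emb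
      (MeasurableEquiv.toLp 2 (Fin d → ℝ)).symm.measurableEmbedding).mpr hprod
    exact this
  refine hE.mono' ?_ ?_
  · exact (Continuous.aestronglyMeasurable (by fun_prop))
  · filter_upwards with u
    rw [Real.norm_eq_abs, abs_of_nonneg (Real.exp_pos _).le, ← Real.exp_sum]
    apply Real.exp_le_exp.2
    have h1 : ∑ i, |u i| ≤ d * ‖u‖ := by
      calc ∑ i, |u i| ≤ ∑ _i : Fin d, ‖u‖ :=
            Finset.sum_le_sum fun i _ => aux_coord_le u i
        _ = d * ‖u‖ := by simp [Finset.sum_const, nsmul_eq_mul]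
    have h2 : c / d * ∑ i, |u i| ≤ c * ‖u‖ := by
      rw [div_mul_eq_mul_div, div_le_iff₀ hd0]
      calc c * ∑ i, |u i| ≤ c * (d * ‖u‖) := by
            exact mul_le_mul_of_nonneg_left h1 hc.le
        _ = c * ‖u‖ * d := by ring
    have e : ∑ i, -(c / (d:ℝ) * |u i|) = -(c / d * ∑ i, |u i|) := by
      rw [Finset.mul_sum, ← Finset.sum_neg_distrib]
    rw [e]
    exact neg_le_neg h2

lemma aux_scale (d : ℕ) {c : ℝ} (hc : 0 < c) :
    ∫ u : EuclideanSpace ℝ (Fin d), Real.exp (-(c * ‖u‖))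
      = ((c ^ d)⁻¹ : ℝ) * ∫ u : EuclideanSpace ℝ (Fin d), Real.exp (-‖u‖) := by
  have h := MeasureTheory.Measure.integral_comp_smul
      (μ := (volume : Measure (EuclideanSpace ℝ (Fin d))))
      (f := fun u : EuclideanSpace ℝ (Fin d) => Real.exp (-‖u‖)) c
  simp only [norm_smul, Real.norm_eq_abs, abs_of_pos hc, finrank_euclideanSpace_fin,
    smul_eq_mul, abs_of_nonneg (inv_nonneg.2 (pow_nonneg hc.le d))] at h
  exact h

theorem stmt_7 (d : ℕ) (hd : 1 ≤ d) (γ : ℝ) (hγ : γ ∈ Set.Ioo (1 : ℝ) 2)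
    (F : ℝ → ℝ)
    (hF : ∀ l : ℝ, F l = ∫ u : EuclideanSpace ℝ (Fin d),
        (∫ y in Metric.closedBall (0 : EuclideanSpace ℝ (Fin d)) 1,
          Real.exp (-(l * ‖y - u‖))) ^ γ) :
    (∀ l : ℝ, 0 < l → Integrable (fun u : EuclideanSpace ℝ (Fin d) =>
        (∫ y in Metric.closedBall (0 : EuclideanSpace ℝ (Fin d)) 1,
          Real.exp (-(l * ‖y - u‖))) ^ γ)) ∧
    (fun l : ℝ => l ^ (-γ) * F l) =O[nhdsWithin 0 (Set.Ioi 0)]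
      (fun l : ℝ => l ^ (-γ - d)) ∧
    (fun l : ℝ => l ^ (-γ) * F l) =O[atTop]
      (fun l : ℝ => l ^ (-(γ * (1 + d)))) := by
  obtain ⟨hγ1, hγ2⟩ := hγ
  have hγ0 : (0 : ℝ) < γ := by linarith
  have hd0 : (0 : ℝ) < d := by exact_mod_cast hd
  set g : ℝ → EuclideanSpace ℝ (Fin d) → ℝ := fun l u =>
    ∫ y in Metric.closedBall (0 : EuclideanSpace ℝ (Fin d)) 1, Real.exp (-(l * ‖y - u‖))
    with hgdef
  set I1 : ℝ := ∫ u : EuclideanSpace ℝ (Fin d), Real.exp (-‖u‖) with hI1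
  have hI1nn : 0 ≤ I1 := integral_nonneg fun u => (Real.exp_pos _).le
  set v1 : ℝ := (volume (Metric.closedBall (0 : EuclideanSpace ℝ (Fin d)) 1)).toReal with hv1
  have hv1nn : 0 ≤ v1 := ENNReal.toReal_nonneg
  -- basic facts about g
  have g_nonneg : ∀ l u, 0 ≤ g l u := fun l u =>
    setIntegral_nonneg measurableSet_closedBall fun y _ => (Real.exp_pos _).le
  have g_cont : ∀ l : ℝ, 0 < l → Continuous (g l) := by
    intro l hl
    apply continuous_of_dominated (bound := fun _ => (1 : ℝ))
    · intro u
      exact (Continuous.aestronglyMeasurable (by fun_prop)).restrict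
    · intro u
      filter_upwards with y
      rw [Real.norm_eq_abs, abs_of_nonneg (Real.exp_pos _).le]
      rw [Real.exp_le_one_iff]
      exact neg_nonpos.2 (mul_nonneg hl.le (norm_nonneg _))
    · exact integrableOn_const measure_closedBall_lt_top.ne
    · filter_upwards with y
      fun_prop
  have g_le_exp : ∀ l : ℝ, 0 < l → ∀ u, g l u ≤ Real.exp (-(l * (‖u‖ - 1))) * v1 := by
    intro l hl u
    have h := norm_setIntegral_le_of_norm_le_const
      (μ := (volume : Measure (EuclideanSpace ℝ (Fin d))))
      (s := Metric.closedBall (0 : EuclideanSpace ℝ (Fin d)) 1)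
      (f := fun y => Real.exp (-(l * ‖y - u‖)))
      (C := Real.exp (-(l * (‖u‖ - 1)))) measure_closedBall_lt_top
      (fun y hy => by
        rw [Real.norm_eq_abs, abs_of_nonneg (Real.exp_pos _).le]
        apply Real.exp_le_exp.2
        apply neg_le_neg
        apply mul_le_mul_of_nonneg_left _ hl.le
        have h1 : ‖y‖ ≤ 1 := mem_closedBall_zero_iff.1 hy
        have h2 : ‖u‖ - ‖y‖ ≤ ‖u - y‖ := norm_sub_norm_le u y
        rw [norm_sub_rev] at h2
        linarith)
    calc g l u ≤ ‖g l u‖ := le_abs_self _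
      _ ≤ Real.exp (-(l * (‖u‖ - 1))) * v1 := h
  have exp_int : ∀ c : ℝ, 0 < c →
      Integrable (fun u : EuclideanSpace ℝ (Fin d) => Real.exp (-(c * ‖u‖))) :=
    fun c hc => aux_intE d hd hc
  have g_pow_le : ∀ l : ℝ, 0 < l → ∀ u,
      (g l u) ^ γ ≤ v1 ^ γ * (Real.exp (γ * l) * Real.exp (-(γ * l * ‖u‖))) := by
    intro l hl u
    calc (g l u) ^ γ ≤ (Real.exp (-(l * (‖u‖ - 1))) * v1) ^ γ :=
          Real.rpow_le_rpow (g_nonneg l u) (g_le_exp l hl u) hγ0.le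
      _ = v1 ^ γ * (Real.exp (γ * l) * Real.exp (-(γ * l * ‖u‖))) := by
          rw [Real.mul_rpow (Real.exp_pos _).le hv1nn, ← Real.exp_mul, ← Real.exp_add,
            mul_comm]
          congr 2
          ring
  have bound_int : ∀ l : ℝ, 0 < l → Integrable (fun u : EuclideanSpace ℝ (Fin d) =>
      v1 ^ γ * (Real.exp (γ * l) * Real.exp (-(γ * l * ‖u‖)))) := by
    intro l hl
    exact ((exp_int (γ * l) (mul_pos hγ0 hl)).const_mul _).const_mul _
  have hint : ∀ l : ℝ, 0 < l →
      Integrable (fun u : EuclideanSpace ℝ (Fin d) => (g l u) ^ γ) := by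
    intro l hl
    refine (bound_int l hl).mono' ?_ ?_
    · exact ((g_cont l hl).rpow_const (fun u => Or.inr hγ0.le)).aestronglyMeasurable
    · filter_upwards with u
      rw [Real.norm_eq_abs, abs_of_nonneg (Real.rpow_nonneg (g_nonneg l u) _)]
      exact g_pow_le l hl u
  have hFnn : ∀ l : ℝ, 0 < l → 0 ≤ F l := by
    intro l hl
    rw [hF l]
    exact integral_nonneg fun u => Real.rpow_nonneg (g_nonneg l u) _
  have hF_le_small : ∀ l : ℝ, 0 < l →
      F l ≤ (v1 ^ γ * (γ ^ d)⁻¹ * I1) * Real.exp (γ * l) * ((l ^ d)⁻¹ : ℝ) := by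
    intro l hl
    rw [hF l]
    calc (∫ u : EuclideanSpace ℝ (Fin d), (g l u) ^ γ)
        ≤ ∫ u : EuclideanSpace ℝ (Fin d),
            v1 ^ γ * (Real.exp (γ * l) * Real.exp (-(γ * l * ‖u‖))) :=
          integral_mono (hint l hl) (bound_int l hl) (g_pow_le l hl)
      _ = v1 ^ γ * (Real.exp (γ * l) * (((γ * l) ^ d)⁻¹ * I1)) := by
          rw [integral_const_mul, integral_const_mul, aux_scale d (mul_pos hγ0 hl)]
      _ = (v1 ^ γ * (γ ^ d)⁻¹ * I1) * Real.exp (γ * l) * ((l ^ d)⁻¹ : ℝ) := by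
          rw [mul_pow, mul_inv]
          ring
  refine ⟨fun l hl => hint l hl, ?_, ?_⟩
  · -- small l
    rw [isBigO_iff]
    refine ⟨(v1 ^ γ * (γ ^ d)⁻¹ * I1) * Real.exp γ, ?_⟩
    filter_upwards [Ioc_mem_nhdsGT_of_mem (Set.mem_Ico.2 ⟨le_refl (0:ℝ), zero_lt_one⟩)]
      with l hl
    obtain ⟨hl0, hl1⟩ := hl
    have hA : 0 ≤ v1 ^ γ * (γ ^ d)⁻¹ * I1 := by positivity
    have h1 : F l ≤ (v1 ^ γ * (γ ^ d)⁻¹ * I1) * Real.exp γ * ((l ^ d)⁻¹ : ℝ) := by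
      calc F l ≤ (v1 ^ γ * (γ ^ d)⁻¹ * I1) * Real.exp (γ * l) * ((l ^ d)⁻¹ : ℝ) :=
            hF_le_small l hl0
        _ ≤ (v1 ^ γ * (γ ^ d)⁻¹ * I1) * Real.exp γ * ((l ^ d)⁻¹ : ℝ) := by
            gcongr
            calc γ * l ≤ γ * 1 := by gcongr
              _ = γ := mul_one γ
    rw [Real.norm_eq_abs, Real.norm_eq_abs,
      abs_of_nonneg (mul_nonneg (Real.rpow_nonneg hl0.le _) (hFnn l hl0)),
      abs_of_nonneg (Real.rpow_pos_of_pos hl0 _).le,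
      Real.rpow_sub hl0, Real.rpow_natCast, div_eq_mul_inv]
    calc l ^ (-γ) * F l
        ≤ l ^ (-γ) * ((v1 ^ γ * (γ ^ d)⁻¹ * I1) * Real.exp γ * ((l ^ d)⁻¹ : ℝ)) := by
          gcongr
      _ = v1 ^ γ * (γ ^ d)⁻¹ * I1 * Real.exp γ * (l ^ (-γ) * (l ^ d)⁻¹) := by ring
  · -- large l
    set v2 : ℝ := (volume (Metric.closedBall (0 : EuclideanSpace ℝ (Fin d)) 2)).toReal with hv2
    have hv2nn : 0 ≤ v2 := ENNReal.toReal_nonneg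
    have g_le_full : ∀ l : ℝ, 0 < l → ∀ u, g l u ≤ ((l ^ d)⁻¹ : ℝ) * I1 := by
      intro l hl u
      have hti : Integrable
          (fun y : EuclideanSpace ℝ (Fin d) => Real.exp (-(l * ‖y - u‖))) :=
        (exp_int l hl).comp_sub_right u
      calc g l u ≤ ∫ y : EuclideanSpace ℝ (Fin d), Real.exp (-(l * ‖y - u‖)) :=
            setIntegral_le_integral hti (ae_of_all _ fun y => (Real.exp_pos _).le)
        _ = ∫ y : EuclideanSpace ℝ (Fin d), Real.exp (-(l * ‖y‖)) :=
            integral_sub_right_eq_self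
              (fun y : EuclideanSpace ℝ (Fin d) => Real.exp (-(l * ‖y‖))) u
        _ = ((l ^ d)⁻¹ : ℝ) * I1 := aux_scale d hl
    have hK : (0:ℝ) ≤ v1 ^ γ * ((γ / 4) ^ d)⁻¹ * I1 := by positivity
    set K : ℝ := v1 ^ γ * ((γ / 4) ^ d)⁻¹ * I1 with hKdef
    -- bound on F for large l
    have hF_le_big : ∀ l : ℝ, 0 < l →
        F l ≤ v2 * (((l ^ d)⁻¹ : ℝ) * I1) ^ γ
            + K * Real.exp (-(γ * l / 2)) * ((l ^ d)⁻¹ : ℝ) := by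
      intro l hl
      have hsplit : F l = (∫ u in Metric.closedBall (0 : EuclideanSpace ℝ (Fin d)) 2,
            (g l u) ^ γ)
          + ∫ u in (Metric.closedBall (0 : EuclideanSpace ℝ (Fin d)) 2)ᶜ, (g l u) ^ γ := by
        rw [hF l, ← integral_add_compl measurableSet_closedBall (hint l hl)]
      have hterm1 : (∫ u in Metric.closedBall (0 : EuclideanSpace ℝ (Fin d)) 2,
            (g l u) ^ γ) ≤ v2 * (((l ^ d)⁻¹ : ℝ) * I1) ^ γ := by
        calc (∫ u in Metric.closedBall (0 : EuclideanSpace ℝ (Fin d)) 2, (g l u) ^ γ)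
            ≤ ∫ _u in Metric.closedBall (0 : EuclideanSpace ℝ (Fin d)) 2,
                (((l ^ d)⁻¹ : ℝ) * I1) ^ γ := by
              apply setIntegral_mono_on ((hint l hl).integrableOn)
                (integrableOn_const measure_closedBall_lt_top.ne)
                measurableSet_closedBall
              intro u _
              exact Real.rpow_le_rpow (g_nonneg l u) (g_le_full l hl u) hγ0.le
          _ = v2 * (((l ^ d)⁻¹ : ℝ) * I1) ^ γ := by
              rw [setIntegral_const, smul_eq_mul]
              rfl
      have hb2 : (0:ℝ) < γ * l / 4 := by positivity
      have hbound2int : Integrable (fun u : EuclideanSpace ℝ (Fin d) =>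
          v1 ^ γ * Real.exp (-(γ * l / 2)) * Real.exp (-(γ * l / 4 * ‖u‖))) :=
        (exp_int _ hb2).const_mul _
      have hterm2 : (∫ u in (Metric.closedBall (0 : EuclideanSpace ℝ (Fin d)) 2)ᶜ,
            (g l u) ^ γ) ≤ K * Real.exp (-(γ * l / 2)) * ((l ^ d)⁻¹ : ℝ) := by
        calc (∫ u in (Metric.closedBall (0 : EuclideanSpace ℝ (Fin d)) 2)ᶜ, (g l u) ^ γ)
            ≤ ∫ u in (Metric.closedBall (0 : EuclideanSpace ℝ (Fin d)) 2)ᶜ,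
                v1 ^ γ * Real.exp (-(γ * l / 2)) * Real.exp (-(γ * l / 4 * ‖u‖)) := by
              apply setIntegral_mono_on ((hint l hl).integrableOn)
                hbound2int.integrableOn measurableSet_closedBall.compl
              intro u hu
              have hu2 : 2 < ‖u‖ := by
                by_contra hc
                exact hu (mem_closedBall_zero_iff.2 (not_lt.1 hc))
              calc (g l u) ^ γ ≤ (Real.exp (-(l * (‖u‖ - 1))) * v1) ^ γ :=
                    Real.rpow_le_rpow (g_nonneg l u) (g_le_exp l hl u) hγ0.le
                _ = v1 ^ γ * Real.exp (-(l * (‖u‖ - 1)) * γ) := by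
                    rw [Real.mul_rpow (Real.exp_pos _).le hv1nn, ← Real.exp_mul, mul_comm]
                _ ≤ v1 ^ γ * Real.exp (-(γ * l / 2) + -(γ * l / 4 * ‖u‖)) := by
                    gcongr
                    nlinarith [hl.le, hγ0.le, mul_pos hγ0 hl]
                _ = v1 ^ γ * Real.exp (-(γ * l / 2)) * Real.exp (-(γ * l / 4 * ‖u‖)) := by
                    rw [Real.exp_add, mul_assoc]
          _ ≤ ∫ u : EuclideanSpace ℝ (Fin d),
                v1 ^ γ * Real.exp (-(γ * l / 2)) * Real.exp (-(γ * l / 4 * ‖u‖)) :=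
              setIntegral_le_integral hbound2int
                (ae_of_all _ fun u => by positivity)
          _ = K * Real.exp (-(γ * l / 2)) * ((l ^ d)⁻¹ : ℝ) := by
              rw [integral_const_mul, aux_scale d hb2, hKdef]
              rw [div_pow, mul_pow, inv_div, div_pow]
              field_simp
              ring
      calc F l = _ := hsplit
        _ ≤ _ := add_le_add hterm1 hterm2
    -- eventual inequality
    rw [isBigO_iff]
    refine ⟨v2 * I1 ^ γ + K, ?_⟩
    have hlit := (isLittleO_rpow_exp_pos_mul_atTop ((γ - 1) * d)
      (by positivity : (0:ℝ) < γ / 2)).bound one_pos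
    filter_upwards [eventually_ge_atTop (1 : ℝ), hlit] with l hl1 hlev
    have hl0 : (0 : ℝ) < l := lt_of_lt_of_le zero_lt_one hl1
    have hldinv : ((l ^ d)⁻¹ : ℝ) = l ^ (-(d : ℝ)) := by
      rw [← Real.rpow_natCast l d, ← Real.rpow_neg hl0.le]
    have hev : l ^ ((γ - 1) * (d:ℝ)) ≤ Real.exp (γ / 2 * l) := by
      have := hlev
      rw [Real.norm_eq_abs, Real.norm_eq_abs, one_mul,
        abs_of_nonneg (Real.rpow_nonneg hl0.le _),
        abs_of_nonneg (Real.exp_pos _).le] at this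
      exact this
    -- key: exp(-(γl/2)) * l^{-d} ≤ l^{-dγ}
    have hkey : Real.exp (-(γ * l / 2)) * ((l ^ d)⁻¹ : ℝ) ≤ l ^ (-(d:ℝ) * γ) := by
      rw [hldinv, Real.exp_neg]
      rw [inv_mul_le_iff₀ (Real.exp_pos _)]
      have e1 : l ^ (-(d:ℝ)) = l ^ ((γ - 1) * (d:ℝ)) * l ^ (-(d:ℝ) * γ) := by
        rw [← Real.rpow_add hl0]
        congr 1
        ring
      rw [e1]
      have e2 : γ * l / 2 = γ / 2 * l := by ring
      rw [e2]
      gcongr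
    have hpow : (((l ^ d)⁻¹ : ℝ) * I1) ^ γ = l ^ (-(d:ℝ) * γ) * I1 ^ γ := by
      rw [hldinv,
        Real.mul_rpow (Real.rpow_nonneg hl0.le _) hI1nn,
        ← Real.rpow_mul hl0.le]
    have hFb : F l ≤ (v2 * I1 ^ γ + K) * l ^ (-(d:ℝ) * γ) := by
      calc F l ≤ v2 * (((l ^ d)⁻¹ : ℝ) * I1) ^ γ
            + K * Real.exp (-(γ * l / 2)) * ((l ^ d)⁻¹ : ℝ) := hF_le_big l hl0
        _ ≤ v2 * (l ^ (-(d:ℝ) * γ) * I1 ^ γ) + K * l ^ (-(d:ℝ) * γ) := by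
            rw [hpow]
            refine add_le_add le_rfl ?_
            rw [mul_assoc]
            exact mul_le_mul_of_nonneg_left hkey hK
        _ = (v2 * I1 ^ γ + K) * l ^ (-(d:ℝ) * γ) := by ring
    rw [Real.norm_eq_abs, Real.norm_eq_abs,
      abs_of_nonneg (mul_nonneg (Real.rpow_nonneg hl0.le _) (hFnn l hl0)),
      abs_of_nonneg (Real.rpow_pos_of_pos hl0 _).le]
    have hsplitexp : l ^ (-(γ * (1 + (d:ℝ)))) = l ^ (-γ) * l ^ (-(d:ℝ) * γ) := by
      rw [← Real.rpow_add hl0]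
      congr 1
      ring
    rw [hsplitexp]
    calc l ^ (-γ) * F l ≤ l ^ (-γ) * ((v2 * I1 ^ γ + K) * l ^ (-(d:ℝ) * γ)) := by
          gcongr
      _ = (v2 * I1 ^ γ + K) * (l ^ (-γ) * l ^ (-(d:ℝ) * γ)) := by ring
end

section
/- Let d ≥ 1 and let Δ ⊂ ℝ^d be a bounded set with nonempty interior, let u be an interior point of Δ, and let λ > 0. Then T^d λ^d ∫_Δ e^{−Tλ‖y−u‖} dy → 2π^{d/2}Γ(d)/Γ(d/2) as T → ∞. -/
open MeasureTheory Real Filter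

section Aux
open Module Pointwise


theorem aux_integrable (d : ℕ) : Integrable (fun x : EuclideanSpace ℝ (Fin d) => Real.exp (-‖x‖)) := by
  set r : ℝ := (d : ℝ) + 1 with hr
  have hr0 : 0 < r := by positivity
  have key : ∀ t : ℝ, 0 ≤ t → Real.exp (-t) ≤ r ^ r * (1 + t) ^ (-r) := by
    intro t ht
    have h1t : (0:ℝ) < 1 + t := by linarith
    have hr1 : (1:ℝ) ≤ r := le_add_of_nonneg_left (Nat.cast_nonneg d)
    have h1 : (1 + t) ≤ r * Real.exp (t / r) := by
      have h := mul_le_mul_of_nonneg_left (Real.add_one_le_exp (t / r)) hr0.le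
      have hrr : r * (t / r + 1) = t + r := by field_simp
      linarith
    have h2 : (1 + t) ^ r ≤ (r * Real.exp (t / r)) ^ r :=
      Real.rpow_le_rpow h1t.le h1 hr0.le
    have h3 : (r * Real.exp (t / r)) ^ r = r ^ r * Real.exp t := by
      rw [Real.mul_rpow hr0.le (Real.exp_pos _).le, ← Real.exp_mul, div_mul_cancel₀ _ hr0.ne']
    rw [h3] at h2
    rw [Real.rpow_neg h1t.le, ← div_eq_mul_inv, le_div_iff₀ (Real.rpow_pos_of_pos h1t r)]
    calc Real.exp (-t) * (1 + t) ^ r ≤ Real.exp (-t) * (r ^ r * Real.exp t) := by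
          gcongr
      _ = r ^ r := by rw [Real.exp_neg]; field_simp
  have hi := (integrable_one_add_norm (E := EuclideanSpace ℝ (Fin d)) (μ := volume) (r := r)
    (by rw [finrank_euclideanSpace_fin]; exact lt_add_one _)).const_mul (r ^ r)
  refine hi.mono' (Continuous.aestronglyMeasurable ?_) (ae_of_all _ fun x => ?_)
  · exact Real.continuous_exp.comp continuous_norm.neg
  · rw [Real.norm_of_nonneg (Real.exp_pos _).le]
    exact key ‖x‖ (norm_nonneg x)


theorem aux_value (d : ℕ) (hd : 1 ≤ d) :
    ∫ x : EuclideanSpace ℝ (Fin d), Real.exp (-‖x‖) =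
      2 * Real.pi ^ ((d : ℝ) / 2) * Real.Gamma d / Real.Gamma ((d : ℝ) / 2) := by
  haveI : Nonempty (Fin d) := ⟨⟨0, hd⟩⟩
  have h1 := MeasureTheory.measure_unitBall_eq_integral_div_gamma
    (volume : Measure (EuclideanSpace ℝ (Fin d))) zero_lt_one
  have h2 := EuclideanSpace.volume_ball (Fin d) 0 1
  simp only [Real.rpow_one, finrank_euclideanSpace_fin, Fintype.card_fin, div_one,
    ENNReal.ofReal_one, one_pow, one_mul] at h1 h2
  rw [h2] at h1
  have hI : (0:ℝ) ≤ ∫ x : EuclideanSpace ℝ (Fin d), Real.exp (-‖x‖) :=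
    integral_nonneg fun x => (Real.exp_pos _).le
  have hd2 : (0:ℝ) < (d:ℝ) / 2 := by positivity
  have hG2 : (0:ℝ) < Real.Gamma ((d:ℝ)/2 + 1) := Real.Gamma_pos_of_pos (by linarith)
  have hGd : (0:ℝ) < Real.Gamma ((d:ℝ) + 1) := Real.Gamma_pos_of_pos (by positivity)
  have heq : Real.sqrt π ^ d / Real.Gamma ((d:ℝ)/2 + 1)
      = (∫ x : EuclideanSpace ℝ (Fin d), Real.exp (-‖x‖)) / Real.Gamma ((d:ℝ) + 1) := by
    rw [← ENNReal.ofReal_eq_ofReal_iff (by positivity) (by positivity), h1]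
  have hsqrt : Real.sqrt π ^ d = π ^ ((d:ℝ) / 2) := by
    rw [Real.sqrt_eq_rpow, ← Real.rpow_natCast (π ^ ((1:ℝ)/2)) d,
      ← Real.rpow_mul Real.pi_pos.le]
    ring_nf
  have hGadd : Real.Gamma ((d:ℝ) + 1) = d * Real.Gamma d :=
    Real.Gamma_add_one (by positivity)
  have hGadd2 : Real.Gamma ((d:ℝ)/2 + 1) = ((d:ℝ)/2) * Real.Gamma ((d:ℝ)/2) :=
    Real.Gamma_add_one hd2.ne'
  have hG2' : (0:ℝ) < Real.Gamma ((d:ℝ)/2) := Real.Gamma_pos_of_pos hd2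
  have hd0 : (0:ℝ) < (d:ℝ) := by positivity
  rw [hsqrt, hGadd, hGadd2] at heq
  field_simp at heq
  rw [eq_div_iff hG2'.ne']
  have h4 : (d:ℝ) * (π ^ ((d:ℝ)/2) * 2 * Real.Gamma d)
      = (d:ℝ) * ((∫ x : EuclideanSpace ℝ (Fin d), Real.exp (-‖x‖)) * Real.Gamma ((d:ℝ)/2)) := by
    linear_combination (d:ℝ) * heq
  have h5 := mul_left_cancel₀ hd0.ne' h4
  linarith

end Aux

open Pointwise Module in
theorem stmt_9 (d : ℕ) (hd : 1 ≤ d)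
    (Δ : Set (EuclideanSpace ℝ (Fin d)))
    (hmeas : MeasurableSet Δ) (hbdd : Bornology.IsBounded Δ)
    (u : EuclideanSpace ℝ (Fin d)) (hu : u ∈ interior Δ)
    (l : ℝ) (hl : 0 < l) :
    Tendsto (fun T : ℝ =>
        T ^ d * l ^ d * ∫ y in Δ, Real.exp (-(T * l * ‖y - u‖)))
      atTop
      (nhds (2 * Real.pi ^ ((d : ℝ) / 2) * Real.Gamma d / Real.Gamma ((d : ℝ) / 2))) := by
  set g : EuclideanSpace ℝ (Fin d) → ℝ := fun z => Real.exp (-‖z‖) with hg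
  set s₀ : Set (EuclideanSpace ℝ (Fin d)) := (· + u) ⁻¹' Δ with hs₀
  have hs₀m : MeasurableSet s₀ := hmeas.preimage (measurable_add_const u)
  obtain ⟨ε, hε, hball⟩ : ∃ ε > 0, Metric.ball u ε ⊆ Δ :=
    Metric.mem_nhds_iff.1 (mem_interior_iff_mem_nhds.1 hu)
  have hball0 : Metric.ball (0 : EuclideanSpace ℝ (Fin d)) ε ⊆ s₀ := by
    intro x hx
    simp only [Metric.mem_ball, dist_zero_right] at hx
    exact hball (by simp [Metric.mem_ball, dist_eq_norm, hx])
  -- smul sets are measurable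
  have hsmul_meas : ∀ c : ℝ, c ≠ 0 → MeasurableSet (c • s₀) := by
    intro c hc
    have : c • s₀ = (fun x : EuclideanSpace ℝ (Fin d) => c⁻¹ • x) ⁻¹' s₀ := by
      ext x
      rw [Set.mem_smul_set_iff_inv_smul_mem₀ hc, Set.mem_preimage]
      rfl
    rw [this]
    exact hs₀m.preimage (measurable_const_smul c⁻¹)
  -- Step 1: eventual equality with the rescaled set integral
  have hEq : ∀ᶠ T : ℝ in atTop,
      T ^ d * l ^ d * (∫ y in Δ, Real.exp (-(T * l * ‖y - u‖)))
        = ∫ z in (T * l) • s₀, g z := by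
    filter_upwards [eventually_gt_atTop 0] with T hT
    set c : ℝ := T * l with hc
    have hc0 : 0 < c := mul_pos hT hl
    have h1 : (∫ y in Δ, Real.exp (-(c * ‖y - u‖)))
        = ∫ x in s₀, Real.exp (-(c * ‖x‖)) := by
      rw [← MeasurePreserving.setIntegral_preimage_emb
        (measurePreserving_add_right volume u)
        (MeasurableEquiv.addRight u).measurableEmbedding
        (fun y => Real.exp (-(c * ‖y - u‖))) Δ]
      simp [add_sub_cancel_right]
      rfl
    have h2 : (∫ x in s₀, Real.exp (-(c * ‖x‖))) = ∫ x in s₀, g (c • x) := by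
      refine setIntegral_congr_fun hs₀m fun x _ => ?_
      simp [hg, norm_smul, abs_of_pos hc0]
    have h3 : (∫ x in s₀, g (c • x)) = (c ^ d)⁻¹ • ∫ z in c • s₀, g z := by
      have := MeasureTheory.Measure.setIntegral_comp_smul_of_pos volume g s₀ hc0
      rwa [finrank_euclideanSpace_fin] at this
    rw [h1, h2, h3, smul_eq_mul]
    have hcd : c ^ d ≠ 0 := pow_ne_zero _ hc0.ne'
    rw [← mul_pow]
    field_simp
    rfl
  -- Step 2: convergence of the set integrals
  have hTend : Tendsto (fun T : ℝ => ∫ z in (T * l) • s₀, g z) atTop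
      (nhds (∫ z : EuclideanSpace ℝ (Fin d), g z)) := by
    have hint : Integrable g := aux_integrable d
    have key := MeasureTheory.tendsto_integral_filter_of_dominated_convergence
      (μ := (volume : Measure (EuclideanSpace ℝ (Fin d)))) (l := atTop)
      (F := fun T : ℝ => ((T * l) • s₀).indicator g) (f := g) (bound := g)
      ?_ ?_ hint ?_
    · refine key.congr fun T => ?_
      rw [integral_indicator]
      by_cases hT : T * l = 0
      · rw [hT, Set.zero_smul_set ⟨0, hball0 (Metric.mem_ball_self hε)⟩]
        exact measurableSet_singleton 0
      · exact hsmul_meas _ hT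
    · filter_upwards [eventually_gt_atTop 0] with T hT
      exact (hint.aestronglyMeasurable).indicator (hsmul_meas _ (mul_pos hT hl).ne')
    · filter_upwards with T
      refine ae_of_all _ fun z => ?_
      refine le_trans (norm_indicator_le_norm_self g z) ?_
      rw [Real.norm_of_nonneg (Real.exp_pos _).le]
    · refine ae_of_all _ fun z => ?_
      have hev : ∀ᶠ T : ℝ in atTop, ((T * l) • s₀).indicator g z = g z := by
        filter_upwards [eventually_gt_atTop (max 0 (‖z‖ / (l * ε)))] with T hT
        have hT0 : 0 < T := lt_of_le_of_lt (le_max_left _ _) hT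
        have hc0 : 0 < T * l := mul_pos hT0 hl
        have hz : z ∈ (T * l) • s₀ := by
          rw [Set.mem_smul_set_iff_inv_smul_mem₀ hc0.ne']
          apply hball0
          simp only [Metric.mem_ball, dist_zero_right, norm_smul, norm_inv,
            Real.norm_of_nonneg hc0.le]
          rw [inv_mul_lt_iff₀ hc0]
          have h' : ‖z‖ / (l * ε) < T := lt_of_le_of_lt (le_max_right _ _) hT
          calc ‖z‖ = (‖z‖ / (l * ε)) * (l * ε) := by field_simp
            _ < T * (l * ε) := by
                apply mul_lt_mul_of_pos_right h' (by positivity)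
            _ = T * l * ε := by ring
        exact Set.indicator_of_mem hz g
      exact tendsto_const_nhds.congr' (hev.mono fun T h => h.symm)
  rw [← aux_value d hd]
  exact Tendsto.congr' (hEq.mono fun T h => h.symm) hTend
end
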